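/- If K > 0 is such that τ̂(x) + τ̂(y) − τ̂(x+y) ≥ K·(‖x‖ + ‖y‖ − ‖x+y‖) for all x, y ∈ ℝ², then f''(θ) + f(θ) ≥ K for every θ; hence the stiffness constant inf_θ (f''(θ) + f(θ)) is the best constant in the sharp triangle inequality. -/

import Mathlib

open scoped RealInnerProductSpace

/-- If the sharp triangle inequality holds with constant `K > 0`, then
`f''(θ) + f(θ) ≥ K` for every `θ`; hence the stiffness constant is the best constant. -/
theorem stiffness_ge_of_sharp_triangle_inequality
    (τ : EuclideanSpace ℝ (Fin 2) → ℝ)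
    (hhom : ∀ c : ℝ, 0 ≤ c → ∀ x, τ (c • x) = c * τ x)
    (hpos : ∀ x : EuclideanSpace ℝ (Fin 2), x ≠ 0 → 0 < τ x)
    (f : ℝ → ℝ)
    (hf : ∀ θ : ℝ, f θ = τ (WithLp.toLp 2 ![Real.cos θ, Real.sin θ] : EuclideanSpace ℝ (Fin 2)))
    (hsmooth : ContDiff ℝ 2 f)
    (K : ℝ) (hK : 0 < K)
    (hSTI : ∀ x y : EuclideanSpace ℝ (Fin 2),
      τ x + τ y - τ (x + y) ≥ K * (‖x‖ + ‖y‖ - ‖x + y‖)) :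
    ∀ θ : ℝ, deriv (deriv f) θ + f θ ≥ K := by
  intro θ
  set u : ℝ → EuclideanSpace ℝ (Fin 2) := fun φ => WithLp.toLp 2 ![Real.cos φ, Real.sin φ] with hu
  have hnorm : ∀ φ, ‖u φ‖ = 1 := by
    intro φ
    rw [EuclideanSpace.norm_eq]
    simp [u, Fin.sum_univ_two, Real.cos_sq_add_sin_sq]
  have hsum : ∀ h : ℝ, u (θ + h) + u (θ - h) = (2 * Real.cos h) • u θ := by
    intro h
    ext i
    fin_cases i <;>
      simp [u, Real.cos_add, Real.cos_sub, Real.sin_add, Real.sin_sub] <;> ring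
  have key : ∀ h : ℝ, 0 ≤ Real.cos h →
      f (θ + h) + f (θ - h) - 2 * Real.cos h * f θ ≥ K * (2 - 2 * Real.cos h) := by
    intro h hc
    have h2c : (0:ℝ) ≤ 2 * Real.cos h := by linarith
    have := hSTI (u (θ + h)) (u (θ - h))
    rw [hsum h, hhom _ h2c, norm_smul] at this
    rw [hnorm, hnorm, hnorm] at this
    rw [Real.norm_eq_abs, abs_of_nonneg h2c] at this
    have e1 : f (θ + h) = τ (u (θ + h)) := hf _
    have e2 : f (θ - h) = τ (u (θ - h)) := hf _
    have e3 : f θ = τ (u θ) := hf _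
    rw [e1, e2, e3]
    linarith
  -- derivatives
  have hf1 : Differentiable ℝ f ∧ ContDiff ℝ 1 (deriv f) := by
    have hsm : ContDiff ℝ (((1:ℕ):ℕ∞) + 1) f := by exact_mod_cast hsmooth
    rw [contDiff_succ_iff_deriv] at hsm
    exact ⟨hsm.1, hsm.2.2⟩
  have hdf : Differentiable ℝ f := hf1.1
  have hdF : Differentiable ℝ (deriv f) := hf1.2.differentiable one_ne_zero
  have hcF2 : Continuous (deriv (deriv f)) := hf1.2.continuous_deriv le_rfl
  set F : ℝ → ℝ := deriv f with hF
  set F2 : ℝ → ℝ := deriv F with hF2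
  set g : ℝ → ℝ := fun h => f (θ + h) + f (θ - h) - 2 * Real.cos h * f θ
      - K * (2 - 2 * Real.cos h) with hg
  set g1 : ℝ → ℝ := fun h => F (θ + h) - F (θ - h) + 2 * Real.sin h * f θ
      - K * (2 * Real.sin h) with hg1def
  set g2 : ℝ → ℝ := fun h => F2 (θ + h) + F2 (θ - h) + 2 * Real.cos h * f θ
      - K * (2 * Real.cos h) with hg2def
  have hadd : ∀ h : ℝ, HasDerivAt (fun t : ℝ => θ + t) 1 h := fun h =>
    (hasDerivAt_id h).const_add θ
  have hsub : ∀ h : ℝ, HasDerivAt (fun t : ℝ => θ - t) (-1) h := fun h =>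
    (hasDerivAt_id h).const_sub θ
  have hDg : ∀ h : ℝ, HasDerivAt g (g1 h) h := by
    intro h
    have h1 : HasDerivAt (fun t => f (θ + t)) (F (θ + h) * 1) h :=
      ((hdf (θ + h)).hasDerivAt).comp h (hadd h)
    have h2 : HasDerivAt (fun t => f (θ - t)) (F (θ - h) * (-1)) h :=
      ((hdf (θ - h)).hasDerivAt).comp h (hsub h)
    have h3 : HasDerivAt (fun t : ℝ => 2 * Real.cos t * f θ)
        (2 * (-Real.sin h) * f θ) h :=
      ((Real.hasDerivAt_cos h).const_mul 2).mul_const (f θ)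
    have h4 : HasDerivAt (fun t : ℝ => K * (2 - 2 * Real.cos t))
        (K * (-(2 * (-Real.sin h)))) h :=
      (((Real.hasDerivAt_cos h).const_mul 2).const_sub 2).const_mul K
    have : HasDerivAt g _ h := ((h1.add h2).sub h3).sub h4
    convert this using 1
    simp [hg1def]; ring
  have hDg1 : ∀ h : ℝ, HasDerivAt g1 (g2 h) h := by
    intro h
    have h1 : HasDerivAt (fun t => F (θ + t)) (F2 (θ + h) * 1) h :=
      ((hdF (θ + h)).hasDerivAt).comp h (hadd h)
    have h2 : HasDerivAt (fun t => F (θ - t)) (F2 (θ - h) * (-1)) h :=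
      ((hdF (θ - h)).hasDerivAt).comp h (hsub h)
    have h3 : HasDerivAt (fun t : ℝ => 2 * Real.sin t * f θ)
        (2 * Real.cos h * f θ) h :=
      ((Real.hasDerivAt_sin h).const_mul 2).mul_const (f θ)
    have h4 : HasDerivAt (fun t : ℝ => K * (2 * Real.sin t))
        (K * (2 * Real.cos h)) h :=
      ((Real.hasDerivAt_sin h).const_mul 2).const_mul K
    have : HasDerivAt g1 _ h := ((h1.sub h2).add h3).sub h4
    convert this using 1
    simp [hg2def]
  -- contradiction argument
  by_contra hlt
  push_neg at hlt
  have hg2cont : Continuous g2 := by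
    apply Continuous.sub
    · exact ((hcF2.comp (continuous_const.add continuous_id)).add
        (hcF2.comp (continuous_const.sub continuous_id))).add
        ((continuous_const.mul Real.continuous_cos).mul continuous_const)
    · exact continuous_const.mul (continuous_const.mul Real.continuous_cos)
  have hg20 : g2 0 < 0 := by
    simp only [hg2def]
    simp only [add_zero, sub_zero, Real.cos_zero, mul_one]
    show F2 θ + F2 θ + 2 * f θ - K * 2 < 0
    have : F2 θ = deriv (deriv f) θ := rfl
    linarith [hlt]
  have hnhds : {x : ℝ | g2 x < 0} ∈ nhds (0:ℝ) := by
    have : Filter.Tendsto g2 (nhds 0) (nhds (g2 0)) := hg2cont.continuousAt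
    exact this (Iio_mem_nhds hg20)
  obtain ⟨δ, hδpos, hδ⟩ := Metric.mem_nhds_iff.mp hnhds
  set ε : ℝ := min (δ / 2) (Real.pi / 2) with hε
  have hεpos : 0 < ε := lt_min (by linarith) (by positivity)
  have hεδ : ε < δ := lt_of_le_of_lt (min_le_left _ _) (by linarith)
  have hg2neg : ∀ x ∈ Set.Icc (0:ℝ) ε, g2 x < 0 := by
    intro x hx
    apply hδ
    rw [Metric.mem_ball, Real.dist_eq, sub_zero, abs_of_nonneg hx.1]
    exact lt_of_le_of_lt hx.2 hεδ
  have hg1cont : Continuous g1 :=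
    continuous_iff_continuousAt.mpr fun x => (hDg1 x).continuousAt
  have hgcont : Continuous g :=
    continuous_iff_continuousAt.mpr fun x => (hDg x).continuousAt
  have hg1anti : StrictAntiOn g1 (Set.Icc (0:ℝ) ε) := by
    apply strictAntiOn_of_deriv_neg (convex_Icc 0 ε) hg1cont.continuousOn
    intro x hx
    rw [interior_Icc] at hx
    rw [(hDg1 x).deriv]
    exact hg2neg x ⟨le_of_lt hx.1, le_of_lt hx.2⟩
  have hg10 : g1 0 = 0 := by simp [hg1def]
  have hganti : StrictAntiOn g (Set.Icc (0:ℝ) ε) := by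
    apply strictAntiOn_of_deriv_neg (convex_Icc 0 ε) hgcont.continuousOn
    intro x hx
    rw [interior_Icc] at hx
    rw [(hDg x).deriv]
    have := hg1anti (Set.left_mem_Icc.mpr (le_of_lt hεpos))
      ⟨le_of_lt hx.1, le_of_lt hx.2⟩ hx.1
    linarith [hg10]
  have hgε : g ε < 0 := by
    have := hganti (Set.left_mem_Icc.mpr (le_of_lt hεpos))
      (Set.right_mem_Icc.mpr (le_of_lt hεpos)) hεpos
    have hg0 : g 0 = 0 := by simp [hg]; ring
    linarith
  have hcosε : 0 ≤ Real.cos ε := by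
    apply Real.cos_nonneg_of_mem_Icc
    have hπ := Real.pi_pos
    constructor
    · linarith
    · exact min_le_right _ _
  have := key ε hcosε
  simp only [hg] at hgε
  linarith
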